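/- Let d and m be positive integers, let D be a d×m rational Dyck matrix, and let P be the rational Dyck positroid induced by D. Then P is connected in the following sense: for all b, b′ ∈ {1,…,d+m} with b ≠ b′, there exists a basis B of P with b ∈ B and b′ ∉ B such that (B \ {b}) ∪ {b′} is also a basis of P. -/

import Mathlib

/-- `D` is a `d × m` rational Dyck matrix: its zero entries (anchored in the
upper-right corner) are cut out by a (vertically reflected) rational Dyck path
of type `(m,d)`; `z j` is the number of north steps preceding the `(j+1)`-st
east step. -/
def IsRDM (d m : ℕ) (D : Matrix (Fin d) (Fin m) ℝ) : Prop :=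
  ∃ z : Fin m → ℕ, Monotone z ∧ (∀ j, z j ≤ d) ∧
    (∀ j : Fin m, m * z j ≤ d * (j : ℕ)) ∧
    (∀ i j, D i j = if (i : ℕ) + 1 ≤ z j then 0 else 1)

/-- The map `φ_{d,m}`: the first `d` columns form the identity matrix and the
entry in row `i`, column `d + j` is `(-1)^(d-i) * D (d+1-i) j` (1-indexed). -/
def phiMat {d m : ℕ} (D : Matrix (Fin d) (Fin m) ℝ) :
    Matrix (Fin d) (Fin (d + m)) ℝ := fun i c =>
  if _ : (c : ℕ) < d then (if (c : ℕ) = (i : ℕ) then (1 : ℝ) else 0)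
  else (-1 : ℝ) ^ (d - 1 - (i : ℕ)) *
    D ⟨d - 1 - (i : ℕ), by have := i.isLt; omega⟩
      ⟨(c : ℕ) - d, by have := c.isLt; omega⟩

/-- `B` is a basis of the matroid represented by the `d × n` matrix `A`. -/
def IsBasisOf {d n : ℕ} (A : Matrix (Fin d) (Fin n) ℝ) (B : Finset (Fin n)) : Prop :=
  B.card = d ∧ LinearIndependent ℝ (fun b : B => (A.transpose b.1))

open Classical in
/-- The weight `ω_A j`: the largest (1-indexed) row index with nonzero entry
in column `j` (and `0` if the column is zero). -/
noncomputable def wt {d n : ℕ} (A : Matrix (Fin d) (Fin n) ℝ) (j : Fin n) : ℕ :=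
  (Finset.univ.filter fun i : Fin d => A i j ≠ 0).sup fun i => (i : ℕ) + 1

/-- `c` is a principal index of `A`: (1-indexed) `d < c+1 ≤ d+m` and the
column `c` differs from the previous column. -/
def IsPrincipal {d m : ℕ} (A : Matrix (Fin d) (Fin (d + m)) ℝ) (c : Fin (d + m)) : Prop :=
  d ≤ (c : ℕ) ∧ ∃ i : Fin d, A i c ≠ A i ⟨(c : ℕ) - 1, by have := c.isLt; omega⟩

/-- Position of `x` in the cyclically shifted order `≤_b`. -/
def shiftVal {n : ℕ} (b x : Fin n) : ℕ := ((x - b : Fin n) : ℕ)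

/-- The list of positions (w.r.t. `≤_b`) of the elements of `B`, sorted increasingly. -/
def shiftedSorted {n : ℕ} (b : Fin n) (B : Finset (Fin n)) : List ℕ :=
  (B.val.map (shiftVal b)).sort (· ≤ ·)

/-- Lexicographic comparison of lists of naturals. -/
def lexLE (l₁ l₂ : List ℕ) : Prop := l₁ = l₂ ∨ List.Lex (· < ·) l₁ l₂

/-- `I` is the entry at base point `b` of the Grassmann necklace of the matroid
represented by `A`: it is the lexicographically `≤_b`-minimal basis. -/
def IsGNEntry {d n : ℕ} (A : Matrix (Fin d) (Fin n) ℝ) (b : Fin n) (I : Finset (Fin n)) : Prop :=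
  IsBasisOf A I ∧ ∀ B, IsBasisOf A B → lexLE (shiftedSorted b I) (shiftedSorted b B)

/-- Cyclic successor on `Fin n`. -/
def finSucc {n : ℕ} (b : Fin n) : Fin n :=
  ⟨((b : ℕ) + 1) % n, Nat.mod_lt _ (by have := b.isLt; omega)⟩



namespace RDPaux

variable {d m : ℕ}

/-- Embedding of row indices as ground-set elements (identity columns). -/
def ι (d m : ℕ) : Fin d ↪ Fin (d + m) := Fin.castAddEmb m

@[simp] lemma iota_val (x : Fin d) : ((ι d m x : Fin (d + m)) : ℕ) = (x : ℕ) := rfl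

lemma mem_map_iota (x : Fin (d + m)) :
    x ∈ Finset.univ.map (ι d m) ↔ (x : ℕ) < d := by
  simp only [Finset.mem_map, Finset.mem_univ, true_and]
  constructor
  · rintro ⟨j, rfl⟩; exact j.isLt
  · intro h; exact ⟨⟨(x : ℕ), h⟩, Fin.ext rfl⟩

def Bas1 (d m : ℕ) (r : Fin d) (c : Fin (d + m)) : Finset (Fin (d + m)) :=
  insert c ((Finset.univ.map (ι d m)).erase (ι d m r))

def Bas2 (d m : ℕ) (r s : Fin d) (c c' : Fin (d + m)) : Finset (Fin (d + m)) :=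
  insert c (insert c' (((Finset.univ.map (ι d m)).erase (ι d m r)).erase (ι d m s)))

lemma mem_bas1 (r : Fin d) (c x : Fin (d + m)) :
    x ∈ Bas1 d m r c ↔ (x : ℕ) = (c : ℕ) ∨ ((x : ℕ) ≠ (r : ℕ) ∧ (x : ℕ) < d) := by
  simp only [Bas1, Finset.mem_insert, Finset.mem_erase, mem_map_iota, ne_eq, Fin.ext_iff,
    iota_val]

lemma mem_bas2 (r s : Fin d) (c c' x : Fin (d + m)) :
    x ∈ Bas2 d m r s c c' ↔ (x : ℕ) = (c : ℕ) ∨ (x : ℕ) = (c' : ℕ) ∨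
      ((x : ℕ) ≠ (s : ℕ) ∧ (x : ℕ) ≠ (r : ℕ) ∧ (x : ℕ) < d) := by
  simp only [Bas2, Finset.mem_insert, Finset.mem_erase, mem_map_iota, ne_eq, Fin.ext_iff,
    iota_val]

end RDPaux

namespace RDPaux

variable {d m : ℕ} (D : Matrix (Fin d) (Fin m) ℝ)

lemma phi_id (i j : Fin d) :
    phiMat D i (ι d m j) = if (j : ℕ) = (i : ℕ) then (1 : ℝ) else 0 := by
  simp only [phiMat, iota_val]
  exact dif_pos j.isLt

lemma phi_col (i : Fin d) (c : Fin (d + m)) (hc : d ≤ (c : ℕ)) :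
    phiMat D i c = (-1 : ℝ) ^ (d - 1 - (i : ℕ)) *
      D ⟨d - 1 - (i : ℕ), by have := i.isLt; omega⟩
        ⟨(c : ℕ) - d, by have := c.isLt; omega⟩ := by
  simp only [phiMat, dif_neg (by omega : ¬ (c : ℕ) < d)]

/-- The master summation step for the linear-independence proofs. -/
lemma key_sum (B : Finset (Fin (d + m))) (g : B → ℝ)
    (hg : ∑ x : B, g x • ((phiMat D).transpose x.1) = 0) (i : Fin d) :
    ∑ x ∈ B, (fun y => if h : y ∈ B then g ⟨y, h⟩ else 0) x * phiMat D i x = 0 := by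
  classical
  have h1 := congrFun hg i
  rw [Finset.sum_apply] at h1
  simp only [Pi.smul_apply, Matrix.transpose_apply, smul_eq_mul, Pi.zero_apply] at h1
  rw [← Finset.sum_coe_sort B (fun y => (if h : y ∈ B then g ⟨y, h⟩ else 0) * phiMat D i y)]
  rw [← h1]
  apply Finset.sum_congr rfl
  intro x _
  rw [dif_pos x.2]

lemma sum_identity_part (G : Fin (d + m) → ℝ) (i : Fin d) :
    ∑ x ∈ Finset.univ.map (ι d m), G x * phiMat D i x = G (ι d m i) := by
  rw [Finset.sum_map]
  have : ∀ j : Fin d, G (ι d m j) * phiMat D i (ι d m j)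
      = if j = i then G (ι d m j) else 0 := by
    intro j
    rw [phi_id]
    by_cases h : j = i
    · simp [h, Fin.ext_iff]
    · rw [if_neg (by simpa [Fin.ext_iff] using h), if_neg h, mul_zero]
  rw [Finset.sum_congr rfl fun j _ => this j]
  simp

end RDPaux

namespace RDPaux

variable {d m : ℕ} (D : Matrix (Fin d) (Fin m) ℝ)

lemma bas0_basis : IsBasisOf (phiMat D) (Finset.univ.map (ι d m)) := by
  classical
  constructor
  · simp
  · rw [Fintype.linearIndependent_iff]
    intro g hg x
    have key := key_sum D _ g hg
    set G : Fin (d + m) → ℝ := fun y =>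
      if h : y ∈ Finset.univ.map (ι d m) then g ⟨y, h⟩ else 0 with hG
    have hx : ((x : Fin (d + m)) : ℕ) < d := (mem_map_iota _).mp x.2
    have hrow : ∀ i : Fin d, G (ι d m i) = 0 := by
      intro i
      have := key i
      rwa [sum_identity_part] at this
    have hxe : (x : Fin (d + m)) = ι d m ⟨((x : Fin (d + m)) : ℕ), hx⟩ := Fin.ext rfl
    have : g x = G (x : Fin (d + m)) := by rw [hG]; simp only [dif_pos x.2]
    rw [this, hxe, hrow]

lemma bas1_basis (r : Fin d) (c : Fin (d + m)) (hc : d ≤ (c : ℕ))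
    (hAc : phiMat D r c ≠ 0) : IsBasisOf (phiMat D) (Bas1 d m r c) := by
  classical
  have hcnm : c ∉ (Finset.univ.map (ι d m)).erase (ι d m r) := by
    intro h
    have := (mem_map_iota c).mp (Finset.mem_of_mem_erase h); omega
  have hrm : ι d m r ∈ Finset.univ.map (ι d m) := by
    rw [mem_map_iota]; exact r.isLt
  constructor
  · rw [Bas1, Finset.card_insert_of_notMem hcnm, Finset.card_erase_of_mem hrm]
    have := r.isLt; simp; omega
  · rw [Fintype.linearIndependent_iff]
    intro g hg x
    have key := key_sum D _ g hg
    set G : Fin (d + m) → ℝ := fun y =>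
      if h : y ∈ Bas1 d m r c then g ⟨y, h⟩ else 0 with hG
    have hrow : ∀ i : Fin d,
        G c * phiMat D i c + (G (ι d m i) - G (ι d m r) * phiMat D i (ι d m r)) = 0 := by
      intro i
      have h1 := key i
      rw [Bas1, Finset.sum_insert hcnm, Finset.sum_erase_eq_sub hrm,
        sum_identity_part] at h1
      linarith [h1]
    have hGc : G c = 0 := by
      have h1 := hrow r
      rw [phi_id, if_pos rfl, mul_one] at h1
      have : G c * phiMat D r c = 0 := by linarith
      rcases mul_eq_zero.mp this with h | h
      · exact h
      · exact absurd h hAc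
    have hGi : ∀ i : Fin d, i ≠ r → G (ι d m i) = 0 := by
      intro i hi
      have h1 := hrow i
      rw [phi_id, if_neg (by simpa [Fin.ext_iff, eq_comm] using hi), mul_zero, hGc,
        zero_mul] at h1
      linarith
    have hgx : g x = G (x : Fin (d + m)) := by rw [hG]; simp only [dif_pos x.2]
    rcases (mem_bas1 r c _).mp x.2 with h | ⟨h1, h2⟩
    · have : (x : Fin (d + m)) = c := Fin.ext h
      rw [hgx, this, hGc]
    · have hxe : (x : Fin (d + m)) = ι d m ⟨((x : Fin (d + m)) : ℕ), h2⟩ := Fin.ext rfl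
      rw [hgx, hxe, hGi _ (by simp [Fin.ext_iff]; exact h1)]

lemma bas2_basis (r s : Fin d) (c c' : Fin (d + m)) (hrs : r ≠ s)
    (hc : d ≤ (c : ℕ)) (hc' : d ≤ (c' : ℕ)) (hcc : c ≠ c')
    (hdet : phiMat D r c * phiMat D s c' - phiMat D r c' * phiMat D s c ≠ 0) :
    IsBasisOf (phiMat D) (Bas2 d m r s c c') := by
  classical
  have hd2 : 2 ≤ d := by
    have h1 := r.isLt; have h2 := s.isLt
    have h3 : (r : ℕ) ≠ (s : ℕ) := fun h => hrs (Fin.ext h)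
    omega
  have hrm : ι d m r ∈ Finset.univ.map (ι d m) := by
    rw [mem_map_iota]; exact r.isLt
  have hsm : ι d m s ∈ (Finset.univ.map (ι d m)).erase (ι d m r) := by
    exact Finset.mem_erase.mpr ⟨fun h => hrs ((ι d m).injective h).symm,
      by rw [mem_map_iota]; exact s.isLt⟩
  have hc'nm : c' ∉ ((Finset.univ.map (ι d m)).erase (ι d m r)).erase (ι d m s) := by
    intro h
    have := (mem_map_iota c').mp (Finset.mem_of_mem_erase (Finset.mem_of_mem_erase h))
    omega
  have hcnm : c ∉ insert c' (((Finset.univ.map (ι d m)).erase (ι d m r)).erase (ι d m s)) := by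
    intro h
    rcases Finset.mem_insert.mp h with h | h
    · exact hcc h
    · have := (mem_map_iota c).mp (Finset.mem_of_mem_erase (Finset.mem_of_mem_erase h))
      omega
  constructor
  · rw [Bas2, Finset.card_insert_of_notMem hcnm, Finset.card_insert_of_notMem hc'nm,
      Finset.card_erase_of_mem hsm, Finset.card_erase_of_mem hrm]
    simp; omega
  · rw [Fintype.linearIndependent_iff]
    intro g hg x
    have key := key_sum D _ g hg
    set G : Fin (d + m) → ℝ := fun y =>
      if h : y ∈ Bas2 d m r s c c' then g ⟨y, h⟩ else 0 with hG
    have hrow : ∀ i : Fin d,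
        G c * phiMat D i c + G c' * phiMat D i c' +
          (G (ι d m i) - G (ι d m r) * phiMat D i (ι d m r)
            - G (ι d m s) * phiMat D i (ι d m s)) = 0 := by
      intro i
      have h1 := key i
      rw [Bas2, Finset.sum_insert hcnm, Finset.sum_insert hc'nm,
        Finset.sum_erase_eq_sub hsm, Finset.sum_erase_eq_sub hrm,
        sum_identity_part] at h1
      linarith [h1]
    have hrr : phiMat D r (ι d m r) = 1 := by rw [phi_id, if_pos rfl]
    have hss : phiMat D s (ι d m s) = 1 := by rw [phi_id, if_pos rfl]
    have hrs' : phiMat D r (ι d m s) = 0 := by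
      rw [phi_id, if_neg (by simpa [Fin.ext_iff, eq_comm] using hrs)]
    have hsr : phiMat D s (ι d m r) = 0 := by
      rw [phi_id, if_neg fun h => hrs (Fin.ext h)]
    have eqr : G c * phiMat D r c + G c' * phiMat D r c' = 0 := by
      have h1 := hrow r; rw [hrr, hrs'] at h1; linarith
    have eqs : G c * phiMat D s c + G c' * phiMat D s c' = 0 := by
      have h1 := hrow s; rw [hss, hsr] at h1; linarith
    have hGc : G c = 0 := by
      have h1 : G c * (phiMat D r c * phiMat D s c' - phiMat D r c' * phiMat D s c) = 0 := by
        linear_combination phiMat D s c' * eqr - phiMat D r c' * eqs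
      rcases mul_eq_zero.mp h1 with h | h
      · exact h
      · exact absurd h hdet
    have hGc' : G c' = 0 := by
      have h1 : G c' * (phiMat D r c * phiMat D s c' - phiMat D r c' * phiMat D s c) = 0 := by
        linear_combination phiMat D r c * eqs - phiMat D s c * eqr
      rcases mul_eq_zero.mp h1 with h | h
      · exact h
      · exact absurd h hdet
    have hGi : ∀ i : Fin d, i ≠ r → i ≠ s → G (ι d m i) = 0 := by
      intro i hir his
      have h1 := hrow i
      rw [phi_id, if_neg (by simpa [Fin.ext_iff, eq_comm] using hir),
        phi_id, if_neg (by simpa [Fin.ext_iff, eq_comm] using his),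
        hGc, hGc'] at h1
      linarith
    have hgx : g x = G (x : Fin (d + m)) := by rw [hG]; simp only [dif_pos x.2]
    rcases (mem_bas2 r s c c' _).mp x.2 with h | h | ⟨h1, h2, h3⟩
    · have : (x : Fin (d + m)) = c := Fin.ext h
      rw [hgx, this, hGc]
    · have : (x : Fin (d + m)) = c' := Fin.ext h
      rw [hgx, this, hGc']
    · have hxe : (x : Fin (d + m)) = ι d m ⟨((x : Fin (d + m)) : ℕ), h3⟩ := Fin.ext rfl
      rw [hgx, hxe, hGi _ (by simp [Fin.ext_iff]; exact h2) (by simp [Fin.ext_iff]; exact h1)]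

end RDPaux

open RDPaux

/-- Proposition 2.10: every rational Dyck positroid is connected: for any two
distinct ground-set elements `b ≠ b'` there is a basis `B` containing `b` and
not `b'` such that `(B \ {b}) ∪ {b'}` is again a basis. -/
theorem rationalDyckPositroid_connected (d m : ℕ) (hd : 0 < d) (hm : 0 < m)
    (D : Matrix (Fin d) (Fin m) ℝ) (hD : IsRDM d m D) :
    ∀ b b' : Fin (d + m), b ≠ b' →
      ∃ B : Finset (Fin (d + m)), IsBasisOf (phiMat D) B ∧ b ∈ B ∧ b' ∉ B ∧
        IsBasisOf (phiMat D) (insert b' (B.erase b)) := by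
  classical
  obtain ⟨z, hmono, hzd, hslope, hval⟩ := hD
  -- basic facts about z
  have hzlt : ∀ j : Fin m, z j < d := by
    intro j
    by_contra h
    push_neg at h
    have h1 : m * d ≤ m * z j := Nat.mul_le_mul_left m h
    have h2 : ((j : ℕ) + 1) ≤ m := j.isLt
    have h3 : d * ((j : ℕ) + 1) ≤ d * m := Nat.mul_le_mul_left d h2
    have h4 : d * ((j : ℕ) + 1) = d * (j : ℕ) + d := by ring
    have h5 := hslope j
    have h6 : m * d = d * m := Nat.mul_comm m d
    linarith
  have hz0 : ∀ j : Fin m, (j : ℕ) = 0 → z j = 0 := by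
    intro j hj
    have h5 := hslope j
    rw [hj, mul_zero] at h5
    have := Nat.le_mul_of_pos_left (z j) hm
    omega
  -- value of the non-identity columns
  have hval' : ∀ (i : Fin d) (c : Fin (d + m)), d ≤ (c : ℕ) →
      phiMat D i c = (-1 : ℝ) ^ (d - 1 - (i : ℕ)) *
        (if d - (i : ℕ) ≤ z ⟨(c : ℕ) - d, by have := c.isLt; omega⟩ then 0 else 1) := by
    intro i c hc
    rw [phi_col D i c hc, hval]
    have h1 : (d - 1 - (i : ℕ)) + 1 = d - (i : ℕ) := by have := i.isLt; omega
    rw [h1]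
  have hnz : ∀ (i : Fin d) (c : Fin (d + m)) (hc : d ≤ (c : ℕ)),
      (i : ℕ) + z ⟨(c : ℕ) - d, by have := c.isLt; omega⟩ < d → phiMat D i c ≠ 0 := by
    intro i c hc h
    rw [hval' i c hc, if_neg (by omega), mul_one]
    exact pow_ne_zero _ (by norm_num)
  have hzero : ∀ (i : Fin d) (c : Fin (d + m)) (hc : d ≤ (c : ℕ)),
      d ≤ (i : ℕ) + z ⟨(c : ℕ) - d, by have := c.isLt; omega⟩ → phiMat D i c = 0 := by
    intro i c hc h
    rw [hval' i c hc, if_pos (by omega), mul_zero]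
  set c0 : Fin (d + m) := ⟨d, by omega⟩ with hc0
  have hc0d : (c0 : ℕ) = d := rfl
  have hAc0 : ∀ i : Fin d, phiMat D i c0 ≠ 0 := by
    intro i
    refine hnz i c0 (le_of_eq hc0d.symm) ?_
    rw [hz0 _ (by simp; omega)]
    have := i.isLt; omega
  set r0 : Fin d := ⟨0, hd⟩ with hr0
  intro b b' hne
  have hne' : (b : ℕ) ≠ (b' : ℕ) := fun h => hne (Fin.ext h)
  rcases lt_or_ge (b : ℕ) d with hb | hb <;> rcases lt_or_ge (b' : ℕ) d with hb' | hb'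
  · -- Case 1 : both identity columns
    refine ⟨Bas1 d m ⟨(b' : ℕ), hb'⟩ c0,
      bas1_basis D _ c0 (le_of_eq hc0d.symm) (hAc0 _), ?_, ?_, ?_⟩
    · rw [mem_bas1]; simp only [Fin.val_mk, hc0, hr0]; omega
    · rw [mem_bas1]; simp only [Fin.val_mk, hc0, hr0]; omega
    · have hEq : insert b' ((Bas1 d m ⟨(b' : ℕ), hb'⟩ c0).erase b)
          = Bas1 d m ⟨(b : ℕ), hb⟩ c0 := by
        ext x
        simp only [Finset.mem_insert, Finset.mem_erase, mem_bas1, ne_eq, Fin.ext_iff, Fin.val_mk, hc0, hr0]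
        omega
      rw [hEq]
      exact bas1_basis D _ c0 (le_of_eq hc0d.symm) (hAc0 _)
  · -- Case 2 : b identity, b' non-identity
    rcases lt_or_ge ((b : ℕ) + z ⟨(b' : ℕ) - d, by have := b'.isLt; omega⟩) d with h1 | h2
    · refine ⟨Finset.univ.map (ι d m), bas0_basis D, ?_, ?_, ?_⟩
      · rw [mem_map_iota]; exact hb
      · rw [mem_map_iota]; omega
      · have hEq : insert b' ((Finset.univ.map (ι d m)).erase b)
            = Bas1 d m ⟨(b : ℕ), hb⟩ b' := by
          ext x
          simp only [Finset.mem_insert, Finset.mem_erase, mem_bas1, mem_map_iota, ne_eq,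
            Fin.ext_iff, Fin.val_mk, hc0, hr0]
          try omega
        rw [hEq]
        exact bas1_basis D _ b' hb' (hnz _ b' hb' h1)
    · have hw : z ⟨(b' : ℕ) - d, by have := b'.isLt; omega⟩ < d := hzlt _
      have hb1 : 1 ≤ (b : ℕ) := by omega
      have hb'1 : d < (b' : ℕ) := by
        rcases Nat.lt_or_ge d (b' : ℕ) with h | h
        · exact h
        · exfalso
          have hb'd : (b' : ℕ) = d := by omega
          have := hz0 ⟨(b' : ℕ) - d, by have := b'.isLt; omega⟩ (by simp [hb'd])
          omega
    -- B = Bas1 r0 c0 ; B' = Bas2 r0 ⟨b⟩ c0 b'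
      refine ⟨Bas1 d m r0 c0, bas1_basis D _ c0 (le_of_eq hc0d.symm) (hAc0 _), ?_, ?_, ?_⟩
      · rw [mem_bas1]; simp only [Fin.val_mk, hc0, hr0]; omega
      · rw [mem_bas1]; simp only [Fin.val_mk, hc0, hr0]; omega
      · have hEq : insert b' ((Bas1 d m r0 c0).erase b)
            = Bas2 d m r0 ⟨(b : ℕ), hb⟩ c0 b' := by
          ext x
          simp only [Finset.mem_insert, Finset.mem_erase, mem_bas1, mem_bas2, ne_eq,
            Fin.ext_iff, Fin.val_mk, hc0, hr0]
          try omega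
        rw [hEq]
        refine bas2_basis D r0 ⟨(b : ℕ), hb⟩ c0 b'
          (by simp only [ne_eq, Fin.ext_iff, Fin.val_mk, hc0, hr0]; omega) (le_of_eq hc0d.symm) (by omega)
          (by simp only [ne_eq, Fin.ext_iff, Fin.val_mk, hc0, hr0]; omega) ?_
        rw [hzero ⟨(b : ℕ), hb⟩ b' (by omega) (by simpa using h2), mul_zero, zero_sub,
          neg_ne_zero]
        exact mul_ne_zero (hnz r0 b' (by omega) (by simpa [hr0] using hw)) (hAc0 _)
  · -- Case 3 : b non-identity, b' identity
    rcases lt_or_ge ((b' : ℕ) + z ⟨(b : ℕ) - d, by have := b.isLt; omega⟩) d with h1 | h2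
    · refine ⟨Bas1 d m ⟨(b' : ℕ), hb'⟩ b,
        bas1_basis D _ b hb (hnz _ b hb h1), ?_, ?_, ?_⟩
      · rw [mem_bas1]; left; rfl
      · rw [mem_bas1]; simp only [Fin.val_mk, hc0, hr0]; omega
      · have hEq : insert b' ((Bas1 d m ⟨(b' : ℕ), hb'⟩ b).erase b)
            = Finset.univ.map (ι d m) := by
          ext x
          simp only [Finset.mem_insert, Finset.mem_erase, mem_bas1, mem_map_iota, ne_eq,
            Fin.ext_iff, Fin.val_mk, hc0, hr0]
          try omega
        rw [hEq]
        exact bas0_basis D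
    · have hw : z ⟨(b : ℕ) - d, by have := b.isLt; omega⟩ < d := hzlt _
      have hb'1 : 1 ≤ (b' : ℕ) := by omega
      have hb1 : d < (b : ℕ) := by
        rcases Nat.lt_or_ge d (b : ℕ) with h | h
        · exact h
        · exfalso
          have hbd : (b : ℕ) = d := by omega
          have := hz0 ⟨(b : ℕ) - d, by have := b.isLt; omega⟩ (by simp [hbd])
          omega
      refine ⟨Bas2 d m r0 ⟨(b' : ℕ), hb'⟩ b c0, ?_, ?_, ?_, ?_⟩
      · refine bas2_basis D r0 ⟨(b' : ℕ), hb'⟩ b c0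
          (by simp only [ne_eq, Fin.ext_iff, Fin.val_mk, hc0, hr0]; omega) hb (le_of_eq hc0d.symm)
          (by simp only [ne_eq, Fin.ext_iff, Fin.val_mk, hc0, hr0]; omega) ?_
        rw [hzero ⟨(b' : ℕ), hb'⟩ b (by omega) (by simpa using h2), mul_zero, sub_zero]
        exact mul_ne_zero (hnz r0 b (by omega) (by simpa [hr0] using hw)) (hAc0 _)
      · rw [mem_bas2]; left; rfl
      · rw [mem_bas2]; simp only [Fin.val_mk, hc0, hr0]; omega
      · have hEq : insert b' ((Bas2 d m r0 ⟨(b' : ℕ), hb'⟩ b c0).erase b)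
            = Bas1 d m r0 c0 := by
          ext x
          simp only [Finset.mem_insert, Finset.mem_erase, mem_bas1, mem_bas2, ne_eq,
            Fin.ext_iff, Fin.val_mk, hc0, hr0]
          try omega
        rw [hEq]
        exact bas1_basis D _ c0 (le_of_eq hc0d.symm) (hAc0 _)
  · -- Case 4 : both non-identity
    refine ⟨Bas1 d m r0 b,
      bas1_basis D _ b hb (hnz r0 b hb (by simpa [hr0] using hzlt _)), ?_, ?_, ?_⟩
    · rw [mem_bas1]; left; rfl
    · rw [mem_bas1]; simp only [Fin.val_mk, hc0, hr0]; omega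
    · have hEq : insert b' ((Bas1 d m r0 b).erase b) = Bas1 d m r0 b' := by
        ext x
        simp only [Finset.mem_insert, Finset.mem_erase, mem_bas1, ne_eq, Fin.ext_iff, Fin.val_mk, hc0, hr0]
        omega
      rw [hEq]
      exact bas1_basis D _ b' hb' (hnz r0 b' hb' (by simpa [hr0] using hzlt _))
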